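/- For every p ∈ ℕ the following linear relations hold in U_q(sl₂)^{⊗N} (with δ_{p,0} the Kronecker delta and scalars identified with scalar multiples of the identity): Σ_{k=0}^{N} c_k⁽ᴺ⁾·𝒲₋ₖ₋ₚ⁽ᴺ⁾ + δ_{p,0}·ε₊⁽ᴺ⁾ = 0; Σ_{k=0}^{N} c_k⁽ᴺ⁾·𝒲ₖ₊₁₊ₚ⁽ᴺ⁾ + δ_{p,0}·ε₋⁽ᴺ⁾ = 0; Σ_{k=0}^{N} c_k⁽ᴺ⁾·𝒢ₖ₊₁₊ₚ⁽ᴺ⁾ = 0; and Σ_{k=0}^{N} c_k⁽ᴺ⁾·𝒢̃ₖ₊₁₊ₚ⁽ᴺ⁾ = 0. -/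

import Mathlib

set_option synthInstance.maxHeartbeats 400000
set_option maxHeartbeats 800000

noncomputable section

namespace TensUq

open TensorProduct

/-- The base field `F = ℚ(q^{1/2})`. -/
abbrev F : Type := RatFunc ℚ

/-- The indeterminate `q^{1/2}`. -/
def sq : F := RatFunc.X

/-- `q = (q^{1/2})²`. -/
def q : F := sq ^ 2

/-- Generators of `U_q(sl₂)`. -/
inductive UGen : Type
  | Sp : UGen
  | Sm : UGen
  | K : UGen
  | Kinv : UGen

/-- Abbreviation in the free algebra. -/
def fU (x : UGen) : FreeAlgebra F UGen := FreeAlgebra.ι F x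

/-- The defining relations of `U_q(sl₂)`. -/
inductive relU : FreeAlgebra F UGen → FreeAlgebra F UGen → Prop
  | kk : relU (fU .K * fU .Kinv) 1
  | kk' : relU (fU .Kinv * fU .K) 1
  | ksp : relU (fU .K * fU .Sp) (q • (fU .Sp * fU .K))
  | ksm : relU (fU .K * fU .Sm) (q⁻¹ • (fU .Sm * fU .K))
  | spsm : relU (fU .Sp * fU .Sm - fU .Sm * fU .Sp)
      ((q - q⁻¹)⁻¹ • (fU .K * fU .K - fU .Kinv * fU .Kinv))

/-- The algebra `U_q(sl₂)`. -/
abbrev U : Type := RingQuot relU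

/-- `S₊`, `S₋`, `K`, `K⁻¹` in `U_q(sl₂)`. -/
def Sp : U := RingQuot.mkAlgHom F relU (fU .Sp)
def Sm : U := RingQuot.mkAlgHom F relU (fU .Sm)
def Kq : U := RingQuot.mkAlgHom F relU (fU .K)
def Kqi : U := RingQuot.mkAlgHom F relU (fU .Kinv)

/-- The iterated tensor power `U_q(sl₂)^{⊗M}` (with `U^{⊗0} = F`), new factors
being added on the left. -/
def TU : ℕ → AlgCat F
  | 0 => AlgCat.of F F
  | (M + 1) => AlgCat.of F (TensorProduct F U (TU M))

/-- The underlying type of `U_q(sl₂)^{⊗M}`. -/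
def El (M : ℕ) : Type := TU M

instance (M : ℕ) : Ring (El M) := inferInstanceAs (Ring (TU M))
instance (M : ℕ) : Algebra F (El M) := inferInstanceAs (Algebra F (TU M))

/-- The simple tensor `x ⊗ y ∈ U ⊗ U^{⊗M} = U^{⊗(M+1)}` (new factor on the left). -/
def tm {M : ℕ} (x : U) (y : El M) : El (M + 1) := x ⊗ₜ[F] y

variable (kp km εp εm : F) (v w : ℕ → F)

/-- `α_{m+1}` (0-indexed: `αf 0 = α₁`). -/
def αf : ℕ → F
  | 0 => v 0 ^ 2 * w 0 / (q + q⁻¹) + εp * εm * (q - q⁻¹) ^ 2 / (kp * km * (q + q⁻¹))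
  | (m + 1) => v (m + 1) ^ 2 * w (m + 1) / (q + q⁻¹)

/-- `ᾱ₁`: the value of `α₁` at `v₁ = 0`. -/
def αbar : F := εp * εm * (q - q⁻¹) ^ 2 / (kp * km * (q + q⁻¹))

/-- The quadruple of families `(𝒲₋ₖ⁽ᴹ⁾, 𝒲ₖ⁽ᴹ⁾, 𝒢ₖ⁽ᴹ⁾, 𝒢̃ₖ⁽ᴹ⁾)` of elements of
`U_q(sl₂)^{⊗M}`, with the conventions `𝒲₀⁽ᴹ⁾ = 0` (second family) and
`𝒢₀⁽ᴹ⁾ = 𝒢̃₀⁽ᴹ⁾ = k₊k₋(q+q⁻¹)²/(q-q⁻¹)`. -/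
def fams : (M : ℕ) → ((ℕ → El M) × (ℕ → El M) × (ℕ → El M) × (ℕ → El M))
  | 0 =>
    (fun k => match k with
      | 0 => (εp : El 0)
      | (m + 1) => ((αf kp km εp εm v w 0 / (q + q⁻¹)) ^ m *
          (αbar kp km εp εm / (q + q⁻¹)) * εp : F),
     fun k => match k with
      | 0 => (0 : F)
      | 1 => (εm : F)
      | (m + 2) => ((αf kp km εp εm v w 0 / (q + q⁻¹)) ^ m *
          (αbar kp km εp εm / (q + q⁻¹)) * εm : F),
     fun k => match k with
      | 0 => (kp * km * (q + q⁻¹) ^ 2 / (q - q⁻¹) : F)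
      | (m + 1) => ((αf kp km εp εm v w 0 / (q + q⁻¹)) ^ m * (εp * εm * (q - q⁻¹)) : F),
     fun k => match k with
      | 0 => (kp * km * (q + q⁻¹) ^ 2 / (q - q⁻¹) : F)
      | (m + 1) => ((αf kp km εp εm v w 0 / (q + q⁻¹)) ^ m * (εp * εm * (q - q⁻¹)) : F))
  | (M + 1) =>
    let p := fams M
    let pwm : ℕ → El M := p.1
    let pwp : ℕ → El M := p.2.1
    let pg : ℕ → El M := p.2.2.1
    let pgt : ℕ → El M := p.2.2.2
    let vM : F := v M
    let wM : F := w M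
    let cb : F := vM ^ 2 / (q + q⁻¹)
    let cc : F := vM ^ 2 * wM / (q + q⁻¹) ^ 2
    let wm' : ℕ → El (M + 1) := fun k =>
      Nat.rec (motive := fun _ => El (M + 1))
        (((q - q⁻¹) * vM * sq / (km * (q + q⁻¹) ^ 2)) • tm (Sp * Kq) (pg 0) +
          tm (Kq * Kq) (pwm 0))
        (fun k ih =>
          ((q - q⁻¹) * vM * sq / (km * (q + q⁻¹) ^ 2)) • tm (Sp * Kq) (pg (k + 1)) +
            tm (Kq * Kq) (pwm (k + 1)) - cb • (tm (1 : U) (pwm k)) + cc • ih) k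
    let wp' : ℕ → El (M + 1) := fun k =>
      Nat.rec (motive := fun _ => El (M + 1)) 0
        (fun k ih =>
          ((q - q⁻¹) * km * vM * sq / (kp * (q + q⁻¹) ^ 2)) • tm (Sm * Kqi) (pgt k) +
            tm (Kqi * Kqi) (pwp (k + 1)) - cb • (tm (1 : U) (pwp k)) + cc • ih) k
    let g' : ℕ → El (M + 1) := fun k =>
      Nat.rec (motive := fun _ => El (M + 1))
        (algebraMap F (El (M + 1)) (kp * km * (q + q⁻¹) ^ 2 / (q - q⁻¹)))
        (fun k ih =>
          ((q ^ 2 - (q⁻¹) ^ 2) * km * vM * sq⁻¹) • tm (Sm * Kq) (pwm k) -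
            cb • (tm (Kq * Kq) (pg k)) + tm (1 : U) (pg (k + 1)) + cc • ih) k
    let gt' : ℕ → El (M + 1) := fun k =>
      Nat.rec (motive := fun _ => El (M + 1))
        (algebraMap F (El (M + 1)) (kp * km * (q + q⁻¹) ^ 2 / (q - q⁻¹)))
        (fun k ih =>
          ((q ^ 2 - (q⁻¹) ^ 2) * kp * vM * sq⁻¹) • tm (Sp * Kqi) (pwp (k + 1)) -
            cb • (tm (Kqi * Kqi) (pgt k)) + tm (1 : U) (pgt (k + 1)) + cc • ih) k
    (wm', wp', g', gt')

/-- The elementary symmetric polynomial `e_j(α₁, …, α_N)`. -/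
def esym (N j : ℕ) : F := Multiset.esymm ((Finset.range N).val.map (αf kp km εp εm v w)) j

/-- The coefficient `c_k⁽ᴺ⁾ = (-1)^{N-k-1}·(q+q⁻¹)^k·e_{N-k}(α₁,…,α_N)`. -/
def cN (N k : ℕ) : F :=
  (-1 : F) ^ ((N : ℤ) - (k : ℤ) - 1) * (q + q⁻¹) ^ k * esym kp km εp εm v w N (N - k)

/-- `ε₊⁽ᴺ⁾ = (-1)^N·(∏ v_m²)·ε₊`. -/
def εpN (N : ℕ) : F := (-1 : F) ^ N * (∏ m ∈ Finset.range N, v m ^ 2) * εp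

/-- `ε₋⁽ᴺ⁾ = (-1)^N·(∏ v_m²)·ε₋`. -/
def εmN (N : ℕ) : F := (-1 : F) ^ N * (∏ m ∈ Finset.range N, v m ^ 2) * εm


/-! ### Auxiliary: scalar non-vanishing lemmas -/

lemma sq_ne : sq ≠ 0 := RatFunc.X_ne_zero

lemma q_ne : q ≠ 0 := pow_ne_zero _ sq_ne

lemma poly_ne (P : Polynomial ℚ) (hP : P.coeff 0 ≠ 0) :
    (algebraMap (Polynomial ℚ) F P) ≠ 0 :=
  RatFunc.algebraMap_ne_zero (fun h => hP (by simp [h]))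

lemma q_sq_add_one_ne : q ^ 2 + 1 ≠ 0 := by
  have h : (q ^ 2 + 1 : F) = algebraMap (Polynomial ℚ) F (Polynomial.X ^ 4 + 1) := by
    simp only [map_add, map_pow, RatFunc.algebraMap_X, map_one, q, sq]
    ring
  rw [h]
  exact poly_ne _ (by simp)

lemma q_sq_sub_one_ne : q ^ 2 - 1 ≠ 0 := by
  have h : (q ^ 2 - 1 : F) = algebraMap (Polynomial ℚ) F (Polynomial.X ^ 4 - 1) := by
    simp only [map_sub, map_pow, RatFunc.algebraMap_X, map_one, q, sq]
    ring
  rw [h]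
  exact poly_ne _ (by simp)

lemma qq_ne : q + q⁻¹ ≠ 0 := by
  have h : q + q⁻¹ = (q ^ 2 + 1) / q := by field_simp [q_ne]
  rw [h]
  exact div_ne_zero q_sq_add_one_ne q_ne

lemma qm_ne : q - q⁻¹ ≠ 0 := by
  have h : q - q⁻¹ = (q ^ 2 - 1) / q := by field_simp [q_ne]
  rw [h]
  exact div_ne_zero q_sq_sub_one_ne q_ne

/-! ### The shift operators -/

section OpQ
variable {V : Type*} [AddCommGroup V] [Module F V] {W : Type*} [AddCommGroup W] [Module F W]

def Lop (α : F) (s : ℕ → V) : ℕ → V := fun p => (q + q⁻¹) • s (p + 1) - α • s p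

def QQ (A : ℕ → F) : ℕ → (ℕ → V) → (ℕ → V)
  | 0, s => s
  | (M+1), s => Lop (A M) (QQ A M s)

lemma Lop_comm (α β : F) (s : ℕ → V) : Lop α (Lop β s) = Lop β (Lop α s) := by
  funext p
  simp only [Lop, smul_sub, smul_smul, mul_comm]
  abel

lemma QQ_lop (A : ℕ → F) (M : ℕ) (α : F) (s : ℕ → V) :
    QQ A M (Lop α s) = Lop α (QQ A M s) := by
  induction M with
  | zero => rfl
  | succ M ih => simp only [QQ, ih, Lop_comm]

lemma Lop_linear (φ : V →ₗ[F] W) (α : F) (s : ℕ → V) :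
    Lop α (fun k => φ (s k)) = fun p => φ (Lop α s p) := by
  funext p; simp [Lop]

lemma QQ_linear (A : ℕ → F) (M : ℕ) (φ : V →ₗ[F] W) (s : ℕ → V) :
    QQ A M (fun k => φ (s k)) = fun p => φ (QQ A M s p) := by
  induction M with
  | zero => rfl
  | succ M ih => simp only [QQ, ih]; exact Lop_linear φ _ _

lemma QQ_shift (A : ℕ → F) (M : ℕ) (s : ℕ → V) :
    QQ A M (fun k => s (k + 1)) = fun p => QQ A M s (p + 1) := by
  induction M with
  | zero => rfl
  | succ M ih => simp only [QQ, ih]; rfl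

lemma QQ_add (A : ℕ → F) (M : ℕ) (s t : ℕ → V) :
    QQ A M (fun k => s k + t k) = fun p => QQ A M s p + QQ A M t p := by
  induction M with
  | zero => rfl
  | succ M ih =>
    simp only [QQ, ih]
    funext p
    simp only [Lop, smul_add]
    abel

lemma QQ_sub (A : ℕ → F) (M : ℕ) (s t : ℕ → V) :
    QQ A M (fun k => s k - t k) = fun p => QQ A M s p - QQ A M t p := by
  induction M with
  | zero => rfl
  | succ M ih =>
    simp only [QQ, ih]
    funext p
    simp only [Lop, smul_sub]
    abel

lemma QQ_smul (A : ℕ → F) (M : ℕ) (c : F) (s : ℕ → V) :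
    QQ A M (fun k => c • s k) = fun p => c • QQ A M s p := by
  induction M with
  | zero => rfl
  | succ M ih =>
    simp only [QQ, ih]
    funext p
    simp only [Lop, smul_sub, smul_smul, mul_comm]

end OpQ

/-! ### Elementary symmetric function recurrences -/

lemma esymm_cons (a : F) (s : Multiset F) (j : ℕ) :
    (a ::ₘ s).esymm (j + 1) = s.esymm (j + 1) + a * s.esymm j := by
  simp only [Multiset.esymm, Multiset.powersetCard_cons, Multiset.map_add, Multiset.sum_add]
  congr 1
  rw [Multiset.map_map]
  simp only [Function.comp, Multiset.prod_cons]
  rw [← Multiset.sum_map_mul_left]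

lemma esym_zero (N : ℕ) : esym kp km εp εm v w N 0 = 1 := by
  simp [esym, Multiset.esymm]

lemma esym_top (N j : ℕ) (h : N < j) : esym kp km εp εm v w N j = 0 := by
  rw [esym, Multiset.esymm, Multiset.powersetCard_eq_empty]
  · simp
  · simpa using h

lemma esym_succ (N j : ℕ) :
    esym kp km εp εm v w (N + 1) (j + 1)
      = esym kp km εp εm v w N (j + 1) + αf kp km εp εm v w N * esym kp km εp εm v w N j := by
  simp only [esym, Finset.range_val, Multiset.range_succ, Multiset.map_cons]
  exact esymm_cons _ _ j

lemma neg_one_pow_two_add (n : ℕ) : (-1 : F) ^ (n + 2) = (-1 : F) ^ n := by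
  rw [pow_add]; norm_num

lemma cN_eq (N k : ℕ) : cN kp km εp εm v w N k
    = (-1 : F) ^ (N + k + 1) * (q + q⁻¹) ^ k * esym kp km εp εm v w N (N - k) := by
  rw [cN]
  congr 2
  have h : ((N + k + 1 : ℕ) : ℤ) = ((N : ℤ) - k - 1) + ((2 * (k + 1) : ℕ) : ℤ) := by
    push_cast; ring
  rw [← zpow_natCast (-1 : F) (N + k + 1), h, zpow_add₀ (by norm_num : (-1 : F) ≠ 0)]
  have h2 : ((-1 : F)) ^ ((2 * (k + 1) : ℕ) : ℤ) = 1 := by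
    rw [zpow_natCast, pow_mul]
    norm_num
  rw [h2, mul_one]

/-! ### The sum-to-operator lemma -/

section SumCN
variable {V : Type*} [AddCommGroup V] [Module F V]

lemma sum_cN (N : ℕ) (s : ℕ → V) (p : ℕ) :
    ∑ k ∈ Finset.range (N + 1), cN kp km εp εm v w N k • s (k + p)
      = - QQ (αf kp km εp εm v w) N s p := by
  induction N generalizing s with
  | zero =>
    have h0 : cN kp km εp εm v w 0 0 = -1 := by
      rw [cN_eq]
      simp [esym_zero]
    simp [h0, QQ]
  | succ N ih =>
    have hca : cN kp km εp εm v w (N + 1) 0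
        = -(αf kp km εp εm v w N * cN kp km εp εm v w N 0) := by
      rw [cN_eq, cN_eq]
      simp only [Nat.sub_zero]
      rw [esym_succ, esym_top kp km εp εm v w N (N + 1) (by omega)]
      rw [show N + 1 + 0 + 1 = N + 0 + 1 + 1 by ring, pow_succ]
      ring
    have hcb : ∀ k, k < N → cN kp km εp εm v w (N + 1) (k + 1)
        = (q + q⁻¹) * cN kp km εp εm v w N k
          - αf kp km εp εm v w N * cN kp km εp εm v w N (k + 1) := by
      intro k hk
      rw [cN_eq, cN_eq, cN_eq]
      have e1 : N + 1 - (k + 1) = (N - (k + 1)) + 1 := by omega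
      have e2 : N - k = (N - (k + 1)) + 1 := by omega
      rw [e1, esym_succ, ← e2]
      rw [show N + 1 + (k + 1) + 1 = N + k + 1 + 2 by ring, neg_one_pow_two_add]
      rw [show N + (k + 1) + 1 = (N + k + 1) + 1 by ring, pow_succ (-1 : F) (N + k + 1)]
      rw [e2, pow_succ (q + q⁻¹) k]
      ring
    have hcc : cN kp km εp εm v w (N + 1) (N + 1)
        = (q + q⁻¹) * cN kp km εp εm v w N N := by
      rw [cN_eq, cN_eq]
      simp only [Nat.sub_self]
      rw [esym_zero, esym_zero,
        show N + 1 + (N + 1) + 1 = (N + N + 1) + 2 by ring, neg_one_pow_two_add,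
        pow_succ (q + q⁻¹) N]
      ring
    have hQ : - QQ (αf kp km εp εm v w) (N + 1) s p
        = ∑ k ∈ Finset.range (N + 1),
            cN kp km εp εm v w N k • (Lop (αf kp km εp εm v w N) s) (k + p) := by
      rw [ih]
      rw [QQ_lop]
      rfl
    rw [hQ]
    have hexp : ∀ k : ℕ, cN kp km εp εm v w N k • (Lop (αf kp km εp εm v w N) s) (k + p)
        = ((q + q⁻¹) * cN kp km εp εm v w N k) • s (k + 1 + p)
          - (αf kp km εp εm v w N * cN kp km εp εm v w N k) • s (k + p) := by
      intro k
      have hnat : k + p + 1 = k + 1 + p := by omega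
      simp only [Lop, smul_sub, smul_smul, hnat, mul_comm]
    simp only [hexp]
    rw [Finset.sum_sub_distrib]
    rw [Finset.sum_range_succ (fun k => ((q + q⁻¹) * cN kp km εp εm v w N k) • s (k + 1 + p))]
    rw [Finset.sum_range_succ' (fun k => (αf kp km εp εm v w N * cN kp km εp εm v w N k) • s (k + p))]
    rw [Finset.sum_range_succ' (fun k => cN kp km εp εm v w (N + 1) k • s (k + p))]
    rw [Finset.sum_range_succ (fun k => cN kp km εp εm v w (N + 1) (k + 1) • s (k + 1 + p))]
    rw [hca, hcc]
    have hmid : ∑ k ∈ Finset.range N, cN kp km εp εm v w (N + 1) (k + 1) • s (k + 1 + p)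
        = ∑ k ∈ Finset.range N, (((q + q⁻¹) * cN kp km εp εm v w N k) • s (k + 1 + p)
            - (αf kp km εp εm v w N * cN kp km εp εm v w N (k + 1)) • s (k + 1 + p)) :=
      Finset.sum_congr rfl (fun k hk => by
        rw [hcb k (Finset.mem_range.mp hk), sub_smul])
    rw [hmid]
    rw [Finset.sum_sub_distrib]
    simp only [zero_add, neg_smul]
    abel

end SumCN


/-! ### Unfolding lemmas for `fams` -/

lemma fams_wm_zero (M : ℕ) :
    (fams kp km εp εm v w (M + 1)).1 0
      = ((q - q⁻¹) * v M * sq / (km * (q + q⁻¹) ^ 2)) •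
          tm (Sp * Kq) ((fams kp km εp εm v w M).2.2.1 0)
        + tm (Kq * Kq) ((fams kp km εp εm v w M).1 0) := rfl

lemma fams_wm_succ (M k : ℕ) :
    (fams kp km εp εm v w (M + 1)).1 (k + 1)
      = ((q - q⁻¹) * v M * sq / (km * (q + q⁻¹) ^ 2)) •
          tm (Sp * Kq) ((fams kp km εp εm v w M).2.2.1 (k + 1))
        + tm (Kq * Kq) ((fams kp km εp εm v w M).1 (k + 1))
        - (v M ^ 2 / (q + q⁻¹)) • tm (1 : U) ((fams kp km εp εm v w M).1 k)
        + (v M ^ 2 * w M / (q + q⁻¹) ^ 2) • (fams kp km εp εm v w (M + 1)).1 k := rfl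

lemma fams_wp_zero (M : ℕ) : (fams kp km εp εm v w (M + 1)).2.1 0 = 0 := rfl

lemma fams_wp_succ (M k : ℕ) :
    (fams kp km εp εm v w (M + 1)).2.1 (k + 1)
      = ((q - q⁻¹) * km * v M * sq / (kp * (q + q⁻¹) ^ 2)) •
          tm (Sm * Kqi) ((fams kp km εp εm v w M).2.2.2 k)
        + tm (Kqi * Kqi) ((fams kp km εp εm v w M).2.1 (k + 1))
        - (v M ^ 2 / (q + q⁻¹)) • tm (1 : U) ((fams kp km εp εm v w M).2.1 k)
        + (v M ^ 2 * w M / (q + q⁻¹) ^ 2) • (fams kp km εp εm v w (M + 1)).2.1 k := rfl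

lemma fams_g_zero (M : ℕ) :
    (fams kp km εp εm v w (M + 1)).2.2.1 0
      = algebraMap F (El (M + 1)) (kp * km * (q + q⁻¹) ^ 2 / (q - q⁻¹)) := rfl

lemma fams_g_succ (M k : ℕ) :
    (fams kp km εp εm v w (M + 1)).2.2.1 (k + 1)
      = ((q ^ 2 - (q⁻¹) ^ 2) * km * v M * sq⁻¹) •
          tm (Sm * Kq) ((fams kp km εp εm v w M).1 k)
        - (v M ^ 2 / (q + q⁻¹)) • tm (Kq * Kq) ((fams kp km εp εm v w M).2.2.1 k)
        + tm (1 : U) ((fams kp km εp εm v w M).2.2.1 (k + 1))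
        + (v M ^ 2 * w M / (q + q⁻¹) ^ 2) • (fams kp km εp εm v w (M + 1)).2.2.1 k := rfl

lemma fams_gt_zero (M : ℕ) :
    (fams kp km εp εm v w (M + 1)).2.2.2 0
      = algebraMap F (El (M + 1)) (kp * km * (q + q⁻¹) ^ 2 / (q - q⁻¹)) := rfl

lemma fams_gt_succ (M k : ℕ) :
    (fams kp km εp εm v w (M + 1)).2.2.2 (k + 1)
      = ((q ^ 2 - (q⁻¹) ^ 2) * kp * v M * sq⁻¹) •
          tm (Sp * Kqi) ((fams kp km εp εm v w M).2.1 (k + 1))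
        - (v M ^ 2 / (q + q⁻¹)) • tm (Kqi * Kqi) ((fams kp km εp εm v w M).2.2.2 k)
        + tm (1 : U) ((fams kp km εp εm v w M).2.2.2 (k + 1))
        + (v M ^ 2 * w M / (q + q⁻¹) ^ 2) • (fams kp km εp εm v w (M + 1)).2.2.2 k := rfl


def tmL {M : ℕ} (x : U) : El M →ₗ[F] El (M + 1) where
  toFun := tm x
  map_add' := fun y z => TensorProduct.tmul_add x y z
  map_smul' := fun c y => (TensorProduct.mk F U (El M) x).map_smul c y

lemma tm_smul {M : ℕ} (x : U) (c : F) (y : El M) : tm x (c • y) = c • tm x y :=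
  (TensorProduct.mk F U (El M) x).map_smul c y

lemma tm_one_one (M : ℕ) : tm (1 : U) (1 : El M) = 1 := rfl

lemma algebraMap_El (M : ℕ) (c : F) : algebraMap F (El M) c = c • (1 : El M) :=
  Algebra.algebraMap_eq_smul_one c

lemma tm_scalar (x : U) (c : F) : tm x (show El 0 from c) = c • tm x (1 : El 0) := by
  exact (congrArg (tm x) (show (show El 0 from c) = c • (1 : El 0) from (mul_one c).symm)).trans
    (tm_smul x c 1)


/-! ### Generic gathering lemmas -/

section Gather
variable {V : Type*} [AddCommGroup V] [Module F V]

lemma comb3 (a b c a' b' c' : F) (x y z : V) (h1 : a = a') (h2 : b = b') (h3 : c = c') :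
    a • x + b • y + c • z = a' • x + b' • y + c' • z := by rw [h1, h2, h3]

lemma eq3 (a b c c' : F) (x y z : V) (h1 : a = 0) (h2 : b = 0) (h3 : c = c') :
    a • x + b • y + c • z = c' • z := by
  rw [h1, h2, h3, zero_smul, zero_smul, zero_add, zero_add]

lemma gatherA (a b c d e f g : F) (x y z : V) :
    a • x + b • y - c • z + g • (d • x + e • y + f • z)
      = (a + g * d) • x + (b + g * e) • y + (g * f - c) • z := by
  simp only [smul_add, smul_smul, add_smul, sub_smul]
  abel

lemma gatherB (a b c d e f g : F) (x y z : V) :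
    a • x - b • y + c • z + g • (d • x + e • y + f • z)
      = (a + g * d) • x + (g * e - b) • y + (c + g * f) • z := by
  simp only [smul_add, smul_smul, add_smul, sub_smul]
  abel

lemma gatherC (a b c d e f g h : F) (x y z : V) :
    g • (a • x + b • y + c • z) - h • (d • x + e • y + f • z)
      = (g * a - h * d) • x + (g * b - h * e) • y + (g * c - h * f) • z := by
  simp only [smul_add, smul_smul, sub_smul]
  abel

end Gather

/-! ### Scalar abbreviations for the level-1 analysis -/

def βc : F := αf kp km εp εm v w 0 / (q + q⁻¹)

def γc : F := αbar kp km εp εm / (q + q⁻¹)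

def G0 : F := kp * km * (q + q⁻¹) ^ 2 / (q - q⁻¹)

lemma alpha0_eq : αf kp km εp εm v w 0
    = v 0 ^ 2 * w 0 / (q + q⁻¹) + εp * εm * (q - q⁻¹) ^ 2 / (kp * km * (q + q⁻¹)) := rfl

lemma alpha_succ (m : ℕ) : αf kp km εp εm v w (m + 1)
    = v (m + 1) ^ 2 * w (m + 1) / (q + q⁻¹) := rfl

lemma hb : αf kp km εp εm v w 0 = (q + q⁻¹) * βc kp km εp εm v w := by
  rw [βc, mul_div_cancel₀ _ qq_ne]

lemma hcc1 :
    v 0 ^ 2 * w 0 / (q + q⁻¹) ^ 2 = βc kp km εp εm v w - γc kp km εp εm := by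
  rw [βc, γc, div_sub_div_same, alpha0_eq, αbar, add_sub_cancel_right, div_div, ← pow_two]

lemma hγG0 (hkp : kp ≠ 0) (hkm : km ≠ 0) :
    γc kp km εp εm * G0 kp km = εp * εm * (q - q⁻¹) := by
  have hne : (kp * km * (q + q⁻¹)) * (q + q⁻¹) * (q - q⁻¹) ≠ 0 :=
    mul_ne_zero (mul_ne_zero (mul_ne_zero (mul_ne_zero hkp hkm) qq_ne) qq_ne) qm_ne
  rw [γc, αbar, G0, div_div, div_mul_div_comm, div_eq_iff hne]
  ring

/-! ### Values of the level-0 families -/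

lemma smul_one_El0 (c : F) : c • (1 : El 0) = (show El 0 from c) := mul_one c

lemma f0_wm_zero : (fams kp km εp εm v w 0).1 0 = εp • (1 : El 0) := by
  rw [smul_one_El0]; rfl

lemma f0_wm_succ (m : ℕ) : (fams kp km εp εm v w 0).1 (m + 1)
    = (βc kp km εp εm v w ^ m * γc kp km εp εm * εp) • (1 : El 0) := by
  rw [smul_one_El0]; rfl

lemma f0_wp_zero : (fams kp km εp εm v w 0).2.1 0 = (0 : F) • (1 : El 0) := by
  rw [smul_one_El0]; rfl

lemma f0_wp_one : (fams kp km εp εm v w 0).2.1 1 = εm • (1 : El 0) := by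
  rw [smul_one_El0]; rfl

lemma f0_wp_succ (m : ℕ) : (fams kp km εp εm v w 0).2.1 (m + 2)
    = (βc kp km εp εm v w ^ m * γc kp km εp εm * εm) • (1 : El 0) := by
  rw [smul_one_El0]; rfl

lemma f0_g_zero : (fams kp km εp εm v w 0).2.2.1 0 = G0 kp km • (1 : El 0) := by
  rw [smul_one_El0]; rfl

lemma f0_g_succ (m : ℕ) : (fams kp km εp εm v w 0).2.2.1 (m + 1)
    = (βc kp km εp εm v w ^ m * (εp * εm * (q - q⁻¹))) • (1 : El 0) := by
  rw [smul_one_El0]; rfl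

lemma f0_gt_zero : (fams kp km εp εm v w 0).2.2.2 0 = G0 kp km • (1 : El 0) := by
  rw [smul_one_El0]; rfl

lemma f0_gt_succ (m : ℕ) : (fams kp km εp εm v w 0).2.2.2 (m + 1)
    = (βc kp km εp εm v w ^ m * (εp * εm * (q - q⁻¹))) • (1 : El 0) := by
  rw [smul_one_El0]; rfl


/-! ### Level-1 specializations of the recursion -/

lemma fams1_wm_zero :
    (fams kp km εp εm v w 1).1 0
      = ((q - q⁻¹) * v 0 * sq / (km * (q + q⁻¹) ^ 2)) •
          tm (Sp * Kq) ((fams kp km εp εm v w 0).2.2.1 0)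
        + tm (Kq * Kq) ((fams kp km εp εm v w 0).1 0) := rfl

lemma fams1_wm_succ (k : ℕ) :
    (fams kp km εp εm v w 1).1 (k + 1)
      = ((q - q⁻¹) * v 0 * sq / (km * (q + q⁻¹) ^ 2)) •
          tm (Sp * Kq) ((fams kp km εp εm v w 0).2.2.1 (k + 1))
        + tm (Kq * Kq) ((fams kp km εp εm v w 0).1 (k + 1))
        - (v 0 ^ 2 / (q + q⁻¹)) • tm (1 : U) ((fams kp km εp εm v w 0).1 k)
        + (v 0 ^ 2 * w 0 / (q + q⁻¹) ^ 2) • (fams kp km εp εm v w 1).1 k := rfl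

lemma fams1_wp_zero : (fams kp km εp εm v w 1).2.1 0 = 0 := rfl

lemma fams1_wp_succ (k : ℕ) :
    (fams kp km εp εm v w 1).2.1 (k + 1)
      = ((q - q⁻¹) * km * v 0 * sq / (kp * (q + q⁻¹) ^ 2)) •
          tm (Sm * Kqi) ((fams kp km εp εm v w 0).2.2.2 k)
        + tm (Kqi * Kqi) ((fams kp km εp εm v w 0).2.1 (k + 1))
        - (v 0 ^ 2 / (q + q⁻¹)) • tm (1 : U) ((fams kp km εp εm v w 0).2.1 k)
        + (v 0 ^ 2 * w 0 / (q + q⁻¹) ^ 2) • (fams kp km εp εm v w 1).2.1 k := rfl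

lemma fams1_g_zero :
    (fams kp km εp εm v w 1).2.2.1 0
      = algebraMap F (El 1) (kp * km * (q + q⁻¹) ^ 2 / (q - q⁻¹)) := rfl

lemma fams1_g_succ (k : ℕ) :
    (fams kp km εp εm v w 1).2.2.1 (k + 1)
      = ((q ^ 2 - (q⁻¹) ^ 2) * km * v 0 * sq⁻¹) •
          tm (Sm * Kq) ((fams kp km εp εm v w 0).1 k)
        - (v 0 ^ 2 / (q + q⁻¹)) • tm (Kq * Kq) ((fams kp km εp εm v w 0).2.2.1 k)
        + tm (1 : U) ((fams kp km εp εm v w 0).2.2.1 (k + 1))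
        + (v 0 ^ 2 * w 0 / (q + q⁻¹) ^ 2) • (fams kp km εp εm v w 1).2.2.1 k := rfl

lemma fams1_gt_zero :
    (fams kp km εp εm v w 1).2.2.2 0
      = algebraMap F (El 1) (kp * km * (q + q⁻¹) ^ 2 / (q - q⁻¹)) := rfl

lemma fams1_gt_succ (k : ℕ) :
    (fams kp km εp εm v w 1).2.2.2 (k + 1)
      = ((q ^ 2 - (q⁻¹) ^ 2) * kp * v 0 * sq⁻¹) •
          tm (Sp * Kqi) ((fams kp km εp εm v w 0).2.1 (k + 1))
        - (v 0 ^ 2 / (q + q⁻¹)) • tm (Kqi * Kqi) ((fams kp km εp εm v w 0).2.2.2 k)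
        + tm (1 : U) ((fams kp km εp εm v w 0).2.2.2 (k + 1))
        + (v 0 ^ 2 * w 0 / (q + q⁻¹) ^ 2) • (fams kp km εp εm v w 1).2.2.2 k := rfl

/-! ### Closed forms of the level-1 families -/

def A1 : ℕ → F
  | 0 => 0
  | (k+1) => -(v 0 ^ 2 / (q + q⁻¹)) * βc kp km εp εm v w ^ k * εp

def BS : ℕ → F
  | 0 => 0
  | (k+1) => (q - q⁻¹) * km * v 0 * sq / (kp * (q + q⁻¹) ^ 2) * βc kp km εp εm v w ^ k * G0 kp km

def BK : ℕ → F
  | 0 => 0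
  | (k+1) => βc kp km εp εm v w ^ k * εm

def B1 : ℕ → F
  | 0 => 0
  | 1 => 0
  | (k+2) => -(v 0 ^ 2 / (q + q⁻¹)) * βc kp km εp εm v w ^ k * εm

def CS : ℕ → F
  | 0 => 0
  | (k+1) => (q ^ 2 - (q⁻¹) ^ 2) * km * v 0 * sq⁻¹ * βc kp km εp εm v w ^ k * εp

def CK : ℕ → F
  | 0 => 0
  | (k+1) => -(v 0 ^ 2 / (q + q⁻¹)) * βc kp km εp εm v w ^ k * G0 kp km

def DS : ℕ → F
  | 0 => 0
  | (k+1) => (q ^ 2 - (q⁻¹) ^ 2) * kp * v 0 * sq⁻¹ * βc kp km εp εm v w ^ k * εm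

lemma wm1_closed (hkp : kp ≠ 0) (hkm : km ≠ 0) (k : ℕ) :
    (fams kp km εp εm v w 1).1 k
      = ((q - q⁻¹) * v 0 * sq / (km * (q + q⁻¹) ^ 2) * βc kp km εp εm v w ^ k * G0 kp km) •
          tm (Sp * Kq) (1 : El 0)
        + (βc kp km εp εm v w ^ k * εp) • tm (Kq * Kq) (1 : El 0)
        + A1 kp km εp εm v w k • tm (1 : U) (1 : El 0) := by
  induction k with
  | zero =>
    rw [fams1_wm_zero, f0_g_zero, f0_wm_zero]
    simp only [tm_smul, smul_smul]
    rw [show A1 kp km εp εm v w 0 = (0 : F) from rfl, zero_smul, add_zero, pow_zero, mul_one,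
      one_mul]
  | succ k ih =>
    rw [fams1_wm_succ, ih, hcc1 kp km εp εm v w, f0_g_succ,
      show εp * εm * (q - q⁻¹) = γc kp km εp εm * G0 kp km from (hγG0 kp km εp εm hkp hkm).symm,
      f0_wm_succ]
    cases k with
    | zero =>
      rw [f0_wm_zero]
      simp only [tm_smul, smul_smul]
      rw [gatherA]
      exact comb3 _ _ _ _ _ _ _ _ _ (by ring) (by ring)
        (by
          rw [show A1 kp km εp εm v w 0 = (0 : F) from rfl,
            show A1 kp km εp εm v w 1
              = -(v 0 ^ 2 / (q + q⁻¹)) * βc kp km εp εm v w ^ 0 * εp from rfl]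
          ring)
    | succ j =>
      rw [f0_wm_succ]
      simp only [tm_smul, smul_smul]
      rw [gatherA]
      exact comb3 _ _ _ _ _ _ _ _ _ (by ring) (by ring)
        (by
          rw [show A1 kp km εp εm v w (j + 1)
              = -(v 0 ^ 2 / (q + q⁻¹)) * βc kp km εp εm v w ^ j * εp from rfl,
            show A1 kp km εp εm v w (j + 2)
              = -(v 0 ^ 2 / (q + q⁻¹)) * βc kp km εp εm v w ^ (j + 1) * εp from rfl]
          ring)

lemma wp1_closed (hkp : kp ≠ 0) (hkm : km ≠ 0) (k : ℕ) :
    (fams kp km εp εm v w 1).2.1 k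
      = BS kp km εp εm v w k • tm (Sm * Kqi) (1 : El 0)
        + BK kp km εp εm v w k • tm (Kqi * Kqi) (1 : El 0)
        + B1 kp km εp εm v w k • tm (1 : U) (1 : El 0) := by
  induction k with
  | zero =>
    rw [fams1_wp_zero,
      show BS kp km εp εm v w 0 = (0 : F) from rfl,
      show BK kp km εp εm v w 0 = (0 : F) from rfl,
      show B1 kp km εp εm v w 0 = (0 : F) from rfl]
    simp
  | succ k ih =>
    rw [fams1_wp_succ, ih, hcc1 kp km εp εm v w]
    cases k with
    | zero =>
      rw [f0_gt_zero, f0_wp_one, f0_wp_zero]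
      simp only [tm_smul, smul_smul]
      rw [gatherA]
      refine comb3 _ _ _ _ _ _ _ _ _ ?_ ?_ ?_ <;>
        (try simp only [BS, BK, B1]) <;> ring
    | succ j =>
      rw [f0_gt_succ,
        show εp * εm * (q - q⁻¹) = γc kp km εp εm * G0 kp km from (hγG0 kp km εp εm hkp hkm).symm,
        f0_wp_succ]
      cases j with
      | zero =>
        rw [f0_wp_one]
        simp only [tm_smul, smul_smul]
        rw [gatherA]
        refine comb3 _ _ _ _ _ _ _ _ _ ?_ ?_ ?_ <;>
          (try simp only [BS, BK, B1]) <;> ring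
      | succ i =>
        rw [f0_wp_succ]
        simp only [tm_smul, smul_smul]
        rw [gatherA]
        refine comb3 _ _ _ _ _ _ _ _ _ ?_ ?_ ?_ <;>
          (try simp only [BS, BK, B1]) <;> ring

lemma g1_closed (hkp : kp ≠ 0) (hkm : km ≠ 0) (k : ℕ) :
    (fams kp km εp εm v w 1).2.2.1 k
      = CS kp km εp εm v w k • tm (Sm * Kq) (1 : El 0)
        + CK kp km εp εm v w k • tm (Kq * Kq) (1 : El 0)
        + (βc kp km εp εm v w ^ k * G0 kp km) • tm (1 : U) (1 : El 0) := by
  induction k with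
  | zero =>
    rw [fams1_g_zero, algebraMap_El, ← tm_one_one]
    symm
    refine eq3 _ _ _ _ _ _ _ rfl rfl ?_
    rw [pow_zero, one_mul]
    rfl
  | succ k ih =>
    rw [fams1_g_succ, ih, hcc1 kp km εp εm v w, f0_g_succ,
      show εp * εm * (q - q⁻¹) = γc kp km εp εm * G0 kp km from (hγG0 kp km εp εm hkp hkm).symm]
    cases k with
    | zero =>
      rw [f0_wm_zero, f0_g_zero]
      simp only [tm_smul, smul_smul]
      rw [gatherB]
      refine comb3 _ _ _ _ _ _ _ _ _ ?_ ?_ ?_ <;>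
        (try simp only [CS, CK]) <;> ring
    | succ j =>
      rw [f0_wm_succ, f0_g_succ,
        show εp * εm * (q - q⁻¹) = γc kp km εp εm * G0 kp km from (hγG0 kp km εp εm hkp hkm).symm]
      simp only [tm_smul, smul_smul]
      rw [gatherB]
      refine comb3 _ _ _ _ _ _ _ _ _ ?_ ?_ ?_ <;>
        (try simp only [CS, CK]) <;> ring

lemma gt1_closed (hkp : kp ≠ 0) (hkm : km ≠ 0) (k : ℕ) :
    (fams kp km εp εm v w 1).2.2.2 k
      = DS kp km εp εm v w k • tm (Sp * Kqi) (1 : El 0)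
        + CK kp km εp εm v w k • tm (Kqi * Kqi) (1 : El 0)
        + (βc kp km εp εm v w ^ k * G0 kp km) • tm (1 : U) (1 : El 0) := by
  induction k with
  | zero =>
    rw [fams1_gt_zero, algebraMap_El, ← tm_one_one]
    symm
    refine eq3 _ _ _ _ _ _ _ rfl rfl ?_
    rw [pow_zero, one_mul]
    rfl
  | succ k ih =>
    rw [fams1_gt_succ, ih, hcc1 kp km εp εm v w, f0_gt_succ,
      show εp * εm * (q - q⁻¹) = γc kp km εp εm * G0 kp km from (hγG0 kp km εp εm hkp hkm).symm]
    cases k with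
    | zero =>
      rw [f0_wp_one, f0_gt_zero]
      simp only [tm_smul, smul_smul]
      rw [gatherB]
      refine comb3 _ _ _ _ _ _ _ _ _ ?_ ?_ ?_ <;>
        (try simp only [DS, CK]) <;> ring
    | succ j =>
      rw [f0_wp_succ, f0_gt_succ,
        show εp * εm * (q - q⁻¹) = γc kp km εp εm * G0 kp km from (hγG0 kp km εp εm hkp hkm).symm]
      simp only [tm_smul, smul_smul]
      rw [gatherB]
      refine comb3 _ _ _ _ _ _ _ _ _ ?_ ?_ ?_ <;>
        (try simp only [DS, CK]) <;> ring


/-! ### More `tm` lemmas -/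

lemma tm_zero {M : ℕ} (x : U) : tm x (0 : El M) = 0 := TensorProduct.tmul_zero _ x

lemma tm_add {M : ℕ} (x : U) (a b : El M) : tm x (a + b) = tm x a + tm x b :=
  TensorProduct.tmul_add x a b

lemma tm_sub {M : ℕ} (x : U) (a b : El M) : tm x (a - b) = tm x a - tm x b :=
  TensorProduct.tmul_sub x a b

lemma tm_one_algebraMap {M : ℕ} (c : F) :
    tm (1 : U) (algebraMap F (El M) c) = algebraMap F (El (M + 1)) c := by
  rw [algebraMap_El, tm_smul, tm_one_one, ← algebraMap_El]

/-! ### Boundary scalars -/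

lemma epN_one : εpN εp v 1 = -(v 0 ^ 2 * εp) := by
  simp [εpN]

lemma emN_one : εmN εm v 1 = -(v 0 ^ 2 * εm) := by
  simp [εmN]

lemma epN_succ (M : ℕ) : εpN εp v (M + 1) = -(v M ^ 2 * εpN εp v M) := by
  simp only [εpN, Finset.prod_range_succ, pow_succ]
  ring

lemma emN_succ (M : ℕ) : εmN εm v (M + 1) = -(v M ^ 2 * εmN εm v M) := by
  simp only [εmN, Finset.prod_range_succ, pow_succ]
  ring

/-! ### The base case `M = 1` -/

lemma QQ_one (s : ℕ → El 1) (p : ℕ) :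
    QQ (αf kp km εp εm v w) 1 s p
      = (q + q⁻¹) • s (p + 1) - ((q + q⁻¹) * βc kp km εp εm v w) • s p := by
  simp only [QQ, Lop]
  rw [← hb]

lemma base_wm (hkp : kp ≠ 0) (hkm : km ≠ 0) (p : ℕ) :
    QQ (αf kp km εp εm v w) 1 ((fams kp km εp εm v w 1).1) p
      = algebraMap F (El 1) (if p = 0 then εpN εp v 1 else 0) := by
  rw [QQ_one, wm1_closed kp km εp εm v w hkp hkm (p + 1), wm1_closed kp km εp εm v w hkp hkm p,
    gatherC, algebraMap_El, ← tm_one_one]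
  refine eq3 _ _ _ _ _ _ _ (by ring) (by ring) ?_
  rcases p with _ | p'
  · rw [if_pos rfl, epN_one,
      show A1 kp km εp εm v w 1 = -(v 0 ^ 2 / (q + q⁻¹)) * βc kp km εp εm v w ^ 0 * εp from rfl,
      show A1 kp km εp εm v w 0 = (0 : F) from rfl]
    field_simp [qq_ne]
    rw [div_eq_iff (mul_ne_zero q_ne q_sq_add_one_ne)]; ring
  · rw [if_neg (by omega),
      show A1 kp km εp εm v w (p' + 2)
        = -(v 0 ^ 2 / (q + q⁻¹)) * βc kp km εp εm v w ^ (p' + 1) * εp from rfl,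
      show A1 kp km εp εm v w (p' + 1)
        = -(v 0 ^ 2 / (q + q⁻¹)) * βc kp km εp εm v w ^ p' * εp from rfl]
    ring

lemma base_wp (hkp : kp ≠ 0) (hkm : km ≠ 0) (p : ℕ) (hp : 1 ≤ p) :
    QQ (αf kp km εp εm v w) 1 ((fams kp km εp εm v w 1).2.1) p
      = algebraMap F (El 1) (if p = 1 then εmN εm v 1 else 0) := by
  rw [QQ_one, wp1_closed kp km εp εm v w hkp hkm (p + 1), wp1_closed kp km εp εm v w hkp hkm p,
    gatherC, algebraMap_El, ← tm_one_one]
  obtain ⟨p', rfl⟩ : ∃ p', p = p' + 1 := ⟨p - 1, by omega⟩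
  refine eq3 _ _ _ _ _ _ _ ?_ ?_ ?_
  · rw [show BS kp km εp εm v w (p' + 2) = (q - q⁻¹) * km * v 0 * sq / (kp * (q + q⁻¹) ^ 2) *
        βc kp km εp εm v w ^ (p' + 1) * G0 kp km from rfl,
      show BS kp km εp εm v w (p' + 1) = (q - q⁻¹) * km * v 0 * sq / (kp * (q + q⁻¹) ^ 2) *
        βc kp km εp εm v w ^ p' * G0 kp km from rfl]
    ring
  · rw [show BK kp km εp εm v w (p' + 2) = βc kp km εp εm v w ^ (p' + 1) * εm from rfl,
      show BK kp km εp εm v w (p' + 1) = βc kp km εp εm v w ^ p' * εm from rfl]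
    ring
  · rcases p' with _ | i
    · rw [if_pos rfl, emN_one,
        show B1 kp km εp εm v w 2 = -(v 0 ^ 2 / (q + q⁻¹)) * βc kp km εp εm v w ^ 0 * εm from rfl,
        show B1 kp km εp εm v w 1 = (0 : F) from rfl]
      field_simp [qq_ne]
      rw [div_eq_iff (mul_ne_zero q_ne q_sq_add_one_ne)]; ring
    · rw [if_neg (by omega),
        show B1 kp km εp εm v w (i + 3)
          = -(v 0 ^ 2 / (q + q⁻¹)) * βc kp km εp εm v w ^ (i + 1) * εm from rfl,
        show B1 kp km εp εm v w (i + 2)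
          = -(v 0 ^ 2 / (q + q⁻¹)) * βc kp km εp εm v w ^ i * εm from rfl]
      ring

lemma base_g (hkp : kp ≠ 0) (hkm : km ≠ 0) (p : ℕ) (hp : 1 ≤ p) :
    QQ (αf kp km εp εm v w) 1 ((fams kp km εp εm v w 1).2.2.1) p = 0 := by
  rw [QQ_one, g1_closed kp km εp εm v w hkp hkm (p + 1), g1_closed kp km εp εm v w hkp hkm p,
    gatherC]
  obtain ⟨p', rfl⟩ : ∃ p', p = p' + 1 := ⟨p - 1, by omega⟩
  refine (eq3 _ _ _ 0 _ _ _ ?_ ?_ (by ring)).trans (zero_smul _ _)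
  · rw [show CS kp km εp εm v w (p' + 2) = (q ^ 2 - (q⁻¹) ^ 2) * km * v 0 * sq⁻¹ *
        βc kp km εp εm v w ^ (p' + 1) * εp from rfl,
      show CS kp km εp εm v w (p' + 1) = (q ^ 2 - (q⁻¹) ^ 2) * km * v 0 * sq⁻¹ *
        βc kp km εp εm v w ^ p' * εp from rfl]
    ring
  · rw [show CK kp km εp εm v w (p' + 2)
        = -(v 0 ^ 2 / (q + q⁻¹)) * βc kp km εp εm v w ^ (p' + 1) * G0 kp km from rfl,
      show CK kp km εp εm v w (p' + 1)
        = -(v 0 ^ 2 / (q + q⁻¹)) * βc kp km εp εm v w ^ p' * G0 kp km from rfl]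
    ring

lemma base_gt (hkp : kp ≠ 0) (hkm : km ≠ 0) (p : ℕ) (hp : 1 ≤ p) :
    QQ (αf kp km εp εm v w) 1 ((fams kp km εp εm v w 1).2.2.2) p = 0 := by
  rw [QQ_one, gt1_closed kp km εp εm v w hkp hkm (p + 1), gt1_closed kp km εp εm v w hkp hkm p,
    gatherC]
  obtain ⟨p', rfl⟩ : ∃ p', p = p' + 1 := ⟨p - 1, by omega⟩
  refine (eq3 _ _ _ 0 _ _ _ ?_ ?_ (by ring)).trans (zero_smul _ _)
  · rw [show DS kp km εp εm v w (p' + 2) = (q ^ 2 - (q⁻¹) ^ 2) * kp * v 0 * sq⁻¹ *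
        βc kp km εp εm v w ^ (p' + 1) * εm from rfl,
      show DS kp km εp εm v w (p' + 1) = (q ^ 2 - (q⁻¹) ^ 2) * kp * v 0 * sq⁻¹ *
        βc kp km εp εm v w ^ p' * εm from rfl]
    ring
  · rw [show CK kp km εp εm v w (p' + 2)
        = -(v 0 ^ 2 / (q + q⁻¹)) * βc kp km εp εm v w ^ (p' + 1) * G0 kp km from rfl,
      show CK kp km εp εm v w (p' + 1)
        = -(v 0 ^ 2 / (q + q⁻¹)) * βc kp km εp εm v w ^ p' * G0 kp km from rfl]
    ring


/-! ### Commuting `QQ` with the structure of the recursion -/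

lemma Lop_comboA {M : ℕ} (α c1 cb : F) (x y z : U) (g t : ℕ → El M) :
    Lop α (fun k => (q + q⁻¹) • (c1 • tm x (g k) + tm y (t (k + 1)) - cb • tm z (t k)))
      = fun p => (q + q⁻¹) • (c1 • tm x (Lop α g p) + tm y (Lop α t (p + 1))
          - cb • tm z (Lop α t p)) := by
  funext p
  simp only [Lop, tm_sub, tm_smul, smul_sub, smul_add, smul_smul]
  simp only [mul_comm, mul_left_comm, mul_assoc]
  abel

lemma Lop_comboB {M : ℕ} (α d1 cb : F) (x y z : U) (u g : ℕ → El M) :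
    Lop α (fun k => (q + q⁻¹) • (d1 • tm x (u k) - cb • tm y (g k) + tm z (g (k + 1))))
      = fun p => (q + q⁻¹) • (d1 • tm x (Lop α u p) - cb • tm y (Lop α g p)
          + tm z (Lop α g (p + 1))) := by
  funext p
  simp only [Lop, tm_sub, tm_smul, smul_sub, smul_add, smul_smul]
  simp only [mul_comm, mul_left_comm, mul_assoc]
  abel

lemma QQ_comboA (A : ℕ → F) (J : ℕ) {M : ℕ} (c1 cb : F) (x y z : U) (g t : ℕ → El M) :
    QQ A J (fun k => (q + q⁻¹) • (c1 • tm x (g k) + tm y (t (k + 1)) - cb • tm z (t k)))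
      = fun p => (q + q⁻¹) • (c1 • tm x (QQ A J g p) + tm y (QQ A J t (p + 1))
          - cb • tm z (QQ A J t p)) := by
  induction J with
  | zero => rfl
  | succ J ih =>
    show Lop (A J) (QQ A J _) = _
    rw [ih]
    exact Lop_comboA (A J) c1 cb x y z (QQ A J g) (QQ A J t)

lemma QQ_comboB (A : ℕ → F) (J : ℕ) {M : ℕ} (d1 cb : F) (x y z : U) (u g : ℕ → El M) :
    QQ A J (fun k => (q + q⁻¹) • (d1 • tm x (u k) - cb • tm y (g k) + tm z (g (k + 1))))
      = fun p => (q + q⁻¹) • (d1 • tm x (QQ A J u p) - cb • tm y (QQ A J g p)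
          + tm z (QQ A J g (p + 1))) := by
  induction J with
  | zero => rfl
  | succ J ih =>
    show Lop (A J) (QQ A J _) = _
    rw [ih]
    exact Lop_comboB (A J) d1 cb x y z (QQ A J u) (QQ A J g)


/-! ### The inductive step -/

lemma smul_helper {V : Type*} [AddCommGroup V] [Module F V] (a : F) (u : V) :
    (a / (q + q⁻¹)) • u = (q + q⁻¹) • ((a / (q + q⁻¹) ^ 2) • u) := by
  rw [smul_smul, ← mul_div_assoc, pow_two, mul_div_mul_left _ _ qq_ne]

lemma qq_cb (a : F) : (q + q⁻¹) * (a / (q + q⁻¹)) = a := by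
  rw [← mul_div_assoc, mul_div_cancel_left₀ _ qq_ne]

lemma step_wm (M : ℕ)
    (IH1 : ∀ p, QQ (αf kp km εp εm v w) (M + 1) ((fams kp km εp εm v w (M + 1)).1) p
        = algebraMap F (El (M + 1)) (if p = 0 then εpN εp v (M + 1) else 0))
    (IH3 : ∀ p, 1 ≤ p →
        QQ (αf kp km εp εm v w) (M + 1) ((fams kp km εp εm v w (M + 1)).2.2.1) p = 0)
    (p : ℕ) :
    QQ (αf kp km εp εm v w) (M + 1 + 1) ((fams kp km εp εm v w (M + 1 + 1)).1) p
      = algebraMap F (El (M + 1 + 1)) (if p = 0 then εpN εp v (M + 1 + 1) else 0) := by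
  have hsm : ∀ u : El (M + 1 + 1), αf kp km εp εm v w (M + 1) • u
      = (q + q⁻¹) • ((v (M + 1) ^ 2 * w (M + 1) / (q + q⁻¹) ^ 2) • u) := by
    intro u
    rw [alpha_succ]
    exact smul_helper (v (M + 1) ^ 2 * w (M + 1)) u
  have hL : Lop (αf kp km εp εm v w (M + 1)) ((fams kp km εp εm v w (M + 1 + 1)).1)
      = fun k => (q + q⁻¹) • (((q - q⁻¹) * v (M + 1) * sq / (km * (q + q⁻¹) ^ 2)) •
            tm (Sp * Kq) ((fams kp km εp εm v w (M + 1)).2.2.1 (k + 1))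
          + tm (Kq * Kq) ((fams kp km εp εm v w (M + 1)).1 (k + 1))
          - (v (M + 1) ^ 2 / (q + q⁻¹)) • tm (1 : U) ((fams kp km εp εm v w (M + 1)).1 k)) := by
    funext k
    show (q + q⁻¹) • (fams kp km εp εm v w (M + 1 + 1)).1 (k + 1)
        - αf kp km εp εm v w (M + 1) • (fams kp km εp εm v w (M + 1 + 1)).1 k = _
    rw [fams_wm_succ, hsm, smul_add, add_sub_cancel_right]
  have hstep : QQ (αf kp km εp εm v w) (M + 1 + 1) ((fams kp km εp εm v w (M + 1 + 1)).1) p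
      = QQ (αf kp km εp εm v w) (M + 1)
          (Lop (αf kp km εp εm v w (M + 1)) ((fams kp km εp εm v w (M + 1 + 1)).1)) p := by
    rw [QQ_lop]
    rfl
  rw [hstep, hL]
  have key := congrFun (QQ_comboA (αf kp km εp εm v w) (M + 1)
      ((q - q⁻¹) * v (M + 1) * sq / (km * (q + q⁻¹) ^ 2)) (v (M + 1) ^ 2 / (q + q⁻¹))
      (Sp * Kq) (Kq * Kq) (1 : U)
      (fun k => (fams kp km εp εm v w (M + 1)).2.2.1 (k + 1))
      ((fams kp km εp εm v w (M + 1)).1)) p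
  refine Eq.trans key ?_
  rw [congrFun (QQ_shift (αf kp km εp εm v w) (M + 1) ((fams kp km εp εm v w (M + 1)).2.2.1)) p,
    IH3 (p + 1) (by omega), tm_zero, smul_zero, IH1 (p + 1), if_neg (Nat.succ_ne_zero p),
    map_zero, tm_zero, IH1 p, tm_one_algebraMap, algebraMap_El, algebraMap_El]
  rw [zero_add, zero_sub, smul_neg, smul_smul, smul_smul, ← neg_smul]
  refine congrArg (· • (1 : El (M + 1 + 1))) ?_
  rcases p with _ | p'
  · rw [if_pos rfl, if_pos rfl, epN_succ εp v (M + 1), qq_cb]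
  · simp

lemma step_wp (M : ℕ)
    (IH2 : ∀ p, 1 ≤ p → QQ (αf kp km εp εm v w) (M + 1) ((fams kp km εp εm v w (M + 1)).2.1) p
        = algebraMap F (El (M + 1)) (if p = 1 then εmN εm v (M + 1) else 0))
    (IH4 : ∀ p, 1 ≤ p →
        QQ (αf kp km εp εm v w) (M + 1) ((fams kp km εp εm v w (M + 1)).2.2.2) p = 0)
    (p : ℕ) (hp : 1 ≤ p) :
    QQ (αf kp km εp εm v w) (M + 1 + 1) ((fams kp km εp εm v w (M + 1 + 1)).2.1) p
      = algebraMap F (El (M + 1 + 1)) (if p = 1 then εmN εm v (M + 1 + 1) else 0) := by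
  have hsm : ∀ u : El (M + 1 + 1), αf kp km εp εm v w (M + 1) • u
      = (q + q⁻¹) • ((v (M + 1) ^ 2 * w (M + 1) / (q + q⁻¹) ^ 2) • u) := by
    intro u
    rw [alpha_succ]
    exact smul_helper (v (M + 1) ^ 2 * w (M + 1)) u
  have hL : Lop (αf kp km εp εm v w (M + 1)) ((fams kp km εp εm v w (M + 1 + 1)).2.1)
      = fun k => (q + q⁻¹) • (((q - q⁻¹) * km * v (M + 1) * sq / (kp * (q + q⁻¹) ^ 2)) •
            tm (Sm * Kqi) ((fams kp km εp εm v w (M + 1)).2.2.2 k)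
          + tm (Kqi * Kqi) ((fams kp km εp εm v w (M + 1)).2.1 (k + 1))
          - (v (M + 1) ^ 2 / (q + q⁻¹)) • tm (1 : U) ((fams kp km εp εm v w (M + 1)).2.1 k)) := by
    funext k
    show (q + q⁻¹) • (fams kp km εp εm v w (M + 1 + 1)).2.1 (k + 1)
        - αf kp km εp εm v w (M + 1) • (fams kp km εp εm v w (M + 1 + 1)).2.1 k = _
    rw [fams_wp_succ, hsm, smul_add, add_sub_cancel_right]
  have hstep : QQ (αf kp km εp εm v w) (M + 1 + 1) ((fams kp km εp εm v w (M + 1 + 1)).2.1) p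
      = QQ (αf kp km εp εm v w) (M + 1)
          (Lop (αf kp km εp εm v w (M + 1)) ((fams kp km εp εm v w (M + 1 + 1)).2.1)) p := by
    rw [QQ_lop]
    rfl
  rw [hstep, hL]
  have key := congrFun (QQ_comboA (αf kp km εp εm v w) (M + 1)
      ((q - q⁻¹) * km * v (M + 1) * sq / (kp * (q + q⁻¹) ^ 2)) (v (M + 1) ^ 2 / (q + q⁻¹))
      (Sm * Kqi) (Kqi * Kqi) (1 : U)
      ((fams kp km εp εm v w (M + 1)).2.2.2)
      ((fams kp km εp εm v w (M + 1)).2.1)) p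
  refine Eq.trans key ?_
  rw [IH4 p hp, tm_zero, smul_zero, IH2 (p + 1) (by omega), if_neg (by omega),
    map_zero, tm_zero, IH2 p hp, tm_one_algebraMap, algebraMap_El, algebraMap_El]
  rw [zero_add, zero_sub, smul_neg, smul_smul, smul_smul, ← neg_smul]
  refine congrArg (· • (1 : El (M + 1 + 1))) ?_
  rcases p with _ | p'
  · omega
  · rcases p' with _ | p''
    · rw [if_pos rfl, if_pos rfl, emN_succ εm v (M + 1), qq_cb]
    · simp

lemma step_g (M : ℕ)
    (IH1 : ∀ p, QQ (αf kp km εp εm v w) (M + 1) ((fams kp km εp εm v w (M + 1)).1) p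
        = algebraMap F (El (M + 1)) (if p = 0 then εpN εp v (M + 1) else 0))
    (IH3 : ∀ p, 1 ≤ p →
        QQ (αf kp km εp εm v w) (M + 1) ((fams kp km εp εm v w (M + 1)).2.2.1) p = 0)
    (p : ℕ) (hp : 1 ≤ p) :
    QQ (αf kp km εp εm v w) (M + 1 + 1) ((fams kp km εp εm v w (M + 1 + 1)).2.2.1) p = 0 := by
  have hsm : ∀ u : El (M + 1 + 1), αf kp km εp εm v w (M + 1) • u
      = (q + q⁻¹) • ((v (M + 1) ^ 2 * w (M + 1) / (q + q⁻¹) ^ 2) • u) := by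
    intro u
    rw [alpha_succ]
    exact smul_helper (v (M + 1) ^ 2 * w (M + 1)) u
  have hL : Lop (αf kp km εp εm v w (M + 1)) ((fams kp km εp εm v w (M + 1 + 1)).2.2.1)
      = fun k => (q + q⁻¹) • (((q ^ 2 - (q⁻¹) ^ 2) * km * v (M + 1) * sq⁻¹) •
            tm (Sm * Kq) ((fams kp km εp εm v w (M + 1)).1 k)
          - (v (M + 1) ^ 2 / (q + q⁻¹)) •
            tm (Kq * Kq) ((fams kp km εp εm v w (M + 1)).2.2.1 k)
          + tm (1 : U) ((fams kp km εp εm v w (M + 1)).2.2.1 (k + 1))) := by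
    funext k
    show (q + q⁻¹) • (fams kp km εp εm v w (M + 1 + 1)).2.2.1 (k + 1)
        - αf kp km εp εm v w (M + 1) • (fams kp km εp εm v w (M + 1 + 1)).2.2.1 k = _
    rw [fams_g_succ, hsm, smul_add, add_sub_cancel_right]
  have hstep : QQ (αf kp km εp εm v w) (M + 1 + 1) ((fams kp km εp εm v w (M + 1 + 1)).2.2.1) p
      = QQ (αf kp km εp εm v w) (M + 1)
          (Lop (αf kp km εp εm v w (M + 1)) ((fams kp km εp εm v w (M + 1 + 1)).2.2.1)) p := by
    rw [QQ_lop]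
    rfl
  rw [hstep, hL]
  have key := congrFun (QQ_comboB (αf kp km εp εm v w) (M + 1)
      ((q ^ 2 - (q⁻¹) ^ 2) * km * v (M + 1) * sq⁻¹) (v (M + 1) ^ 2 / (q + q⁻¹))
      (Sm * Kq) (Kq * Kq) (1 : U)
      ((fams kp km εp εm v w (M + 1)).1)
      ((fams kp km εp εm v w (M + 1)).2.2.1)) p
  refine Eq.trans key ?_
  rw [IH1 p, if_neg (by omega), map_zero, tm_zero, smul_zero, IH3 p hp, tm_zero, smul_zero,
    IH3 (p + 1) (by omega), tm_zero]
  simp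

lemma step_gt (M : ℕ)
    (IH2 : ∀ p, 1 ≤ p → QQ (αf kp km εp εm v w) (M + 1) ((fams kp km εp εm v w (M + 1)).2.1) p
        = algebraMap F (El (M + 1)) (if p = 1 then εmN εm v (M + 1) else 0))
    (IH4 : ∀ p, 1 ≤ p →
        QQ (αf kp km εp εm v w) (M + 1) ((fams kp km εp εm v w (M + 1)).2.2.2) p = 0)
    (p : ℕ) (hp : 1 ≤ p) :
    QQ (αf kp km εp εm v w) (M + 1 + 1) ((fams kp km εp εm v w (M + 1 + 1)).2.2.2) p = 0 := by
  have hsm : ∀ u : El (M + 1 + 1), αf kp km εp εm v w (M + 1) • u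
      = (q + q⁻¹) • ((v (M + 1) ^ 2 * w (M + 1) / (q + q⁻¹) ^ 2) • u) := by
    intro u
    rw [alpha_succ]
    exact smul_helper (v (M + 1) ^ 2 * w (M + 1)) u
  have hL : Lop (αf kp km εp εm v w (M + 1)) ((fams kp km εp εm v w (M + 1 + 1)).2.2.2)
      = fun k => (q + q⁻¹) • (((q ^ 2 - (q⁻¹) ^ 2) * kp * v (M + 1) * sq⁻¹) •
            tm (Sp * Kqi) ((fams kp km εp εm v w (M + 1)).2.1 (k + 1))
          - (v (M + 1) ^ 2 / (q + q⁻¹)) •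
            tm (Kqi * Kqi) ((fams kp km εp εm v w (M + 1)).2.2.2 k)
          + tm (1 : U) ((fams kp km εp εm v w (M + 1)).2.2.2 (k + 1))) := by
    funext k
    show (q + q⁻¹) • (fams kp km εp εm v w (M + 1 + 1)).2.2.2 (k + 1)
        - αf kp km εp εm v w (M + 1) • (fams kp km εp εm v w (M + 1 + 1)).2.2.2 k = _
    rw [fams_gt_succ, hsm, smul_add, add_sub_cancel_right]
  have hstep : QQ (αf kp km εp εm v w) (M + 1 + 1) ((fams kp km εp εm v w (M + 1 + 1)).2.2.2) p
      = QQ (αf kp km εp εm v w) (M + 1)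
          (Lop (αf kp km εp εm v w (M + 1)) ((fams kp km εp εm v w (M + 1 + 1)).2.2.2)) p := by
    rw [QQ_lop]
    rfl
  rw [hstep, hL]
  have key := congrFun (QQ_comboB (αf kp km εp εm v w) (M + 1)
      ((q ^ 2 - (q⁻¹) ^ 2) * kp * v (M + 1) * sq⁻¹) (v (M + 1) ^ 2 / (q + q⁻¹))
      (Sp * Kqi) (Kqi * Kqi) (1 : U)
      (fun k => (fams kp km εp εm v w (M + 1)).2.1 (k + 1))
      ((fams kp km εp εm v w (M + 1)).2.2.2)) p
  refine Eq.trans key ?_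
  rw [congrFun (QQ_shift (αf kp km εp εm v w) (M + 1) ((fams kp km εp εm v w (M + 1)).2.1)) p,
    IH2 (p + 1) (by omega), if_neg (by omega), map_zero, tm_zero, smul_zero, IH4 p hp, tm_zero,
    smul_zero, IH4 (p + 1) (by omega), tm_zero]
  simp

/-! ### The main induction -/

lemma main_induction (hkp : kp ≠ 0) (hkm : km ≠ 0) (M : ℕ) (hM : 1 ≤ M) :
    (∀ p, QQ (αf kp km εp εm v w) M ((fams kp km εp εm v w M).1) p
        = algebraMap F (El M) (if p = 0 then εpN εp v M else 0)) ∧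
    (∀ p, 1 ≤ p → QQ (αf kp km εp εm v w) M ((fams kp km εp εm v w M).2.1) p
        = algebraMap F (El M) (if p = 1 then εmN εm v M else 0)) ∧
    (∀ p, 1 ≤ p → QQ (αf kp km εp εm v w) M ((fams kp km εp εm v w M).2.2.1) p = 0) ∧
    (∀ p, 1 ≤ p → QQ (αf kp km εp εm v w) M ((fams kp km εp εm v w M).2.2.2) p = 0) := by
  induction M with
  | zero => exact absurd hM (by omega)
  | succ M ih =>
    rcases M with _ | M'
    · exact ⟨base_wm kp km εp εm v w hkp hkm,
        fun p hp => base_wp kp km εp εm v w hkp hkm p hp,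
        fun p hp => base_g kp km εp εm v w hkp hkm p hp,
        fun p hp => base_gt kp km εp εm v w hkp hkm p hp⟩
    · obtain ⟨IH1, IH2, IH3, IH4⟩ := ih (by omega)
      exact ⟨step_wm kp km εp εm v w M' IH1 IH3,
        fun p hp => step_wp kp km εp εm v w M' IH2 IH4 p hp,
        fun p hp => step_g kp km εp εm v w M' IH1 IH3 p hp,
        fun p hp => step_gt kp km εp εm v w M' IH2 IH4 p hp⟩

/-- The shifted linear relations among the dressed operators in `U_q(sl₂)^{⊗N}`
(Lemma 4.4 of the paper): for every `p ∈ ℕ`. -/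
theorem statement16 (hkp : kp ≠ 0) (hkm : km ≠ 0) (N : ℕ) (hN : 1 ≤ N) (p : ℕ) :
    (∑ k ∈ Finset.range (N + 1),
        cN kp km εp εm v w N k • (fams kp km εp εm v w N).1 (k + p)) +
      algebraMap F (El N) (if p = 0 then εpN εp v N else 0) = 0 ∧
    (∑ k ∈ Finset.range (N + 1),
        cN kp km εp εm v w N k • (fams kp km εp εm v w N).2.1 (k + 1 + p)) +
      algebraMap F (El N) (if p = 0 then εmN εm v N else 0) = 0 ∧
    (∑ k ∈ Finset.range (N + 1),
        cN kp km εp εm v w N k • (fams kp km εp εm v w N).2.2.1 (k + 1 + p)) = 0 ∧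
    (∑ k ∈ Finset.range (N + 1),
        cN kp km εp εm v w N k • (fams kp km εp εm v w N).2.2.2 (k + 1 + p)) = 0 := by
  obtain ⟨H1, H2, H3, H4⟩ := main_induction kp km εp εm v w hkp hkm N hN
  refine ⟨?_, ?_, ?_, ?_⟩
  · rw [sum_cN kp km εp εm v w N ((fams kp km εp εm v w N).1) p, H1 p]
    exact neg_add_cancel _
  · have e1 : ∑ k ∈ Finset.range (N + 1),
          cN kp km εp εm v w N k • (fams kp km εp εm v w N).2.1 (k + 1 + p)
        = ∑ k ∈ Finset.range (N + 1),
          cN kp km εp εm v w N k • (fun j => (fams kp km εp εm v w N).2.1 (j + 1)) (k + p) :=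
      Finset.sum_congr rfl (fun k _ => by rw [show k + 1 + p = k + p + 1 from by omega])
    rw [e1, sum_cN kp km εp εm v w N (fun j => (fams kp km εp εm v w N).2.1 (j + 1)) p,
      congrFun (QQ_shift (αf kp km εp εm v w) N ((fams kp km εp εm v w N).2.1)) p,
      H2 (p + 1) (by omega),
      show (if p + 1 = 1 then εmN εm v N else 0) = (if p = 0 then εmN εm v N else 0) from by
        rcases p with _ | p
        · simp
        · simp]
    exact neg_add_cancel _
  · have e1 : ∑ k ∈ Finset.range (N + 1),
          cN kp km εp εm v w N k • (fams kp km εp εm v w N).2.2.1 (k + 1 + p)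
        = ∑ k ∈ Finset.range (N + 1),
          cN kp km εp εm v w N k • (fun j => (fams kp km εp εm v w N).2.2.1 (j + 1)) (k + p) :=
      Finset.sum_congr rfl (fun k _ => by rw [show k + 1 + p = k + p + 1 from by omega])
    rw [e1, sum_cN kp km εp εm v w N (fun j => (fams kp km εp εm v w N).2.2.1 (j + 1)) p,
      congrFun (QQ_shift (αf kp km εp εm v w) N ((fams kp km εp εm v w N).2.2.1)) p,
      H3 (p + 1) (by omega), neg_zero]
  · have e1 : ∑ k ∈ Finset.range (N + 1),
          cN kp km εp εm v w N k • (fams kp km εp εm v w N).2.2.2 (k + 1 + p)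
        = ∑ k ∈ Finset.range (N + 1),
          cN kp km εp εm v w N k • (fun j => (fams kp km εp εm v w N).2.2.2 (j + 1)) (k + p) :=
      Finset.sum_congr rfl (fun k _ => by rw [show k + 1 + p = k + p + 1 from by omega])
    rw [e1, sum_cN kp km εp εm v w N (fun j => (fams kp km εp εm v w N).2.2.2 (j + 1)) p,
      congrFun (QQ_shift (αf kp km εp εm v w) N ((fams kp km εp εm v w N).2.2.2)) p,
      H4 (p + 1) (by omega), neg_zero]

end TensUq
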